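/- arXiv:1106.3920 — 3 statements merged into one kernel-verified Lean document; each statement's English description precedes it below -/
import Mathlib

section
/- Every non-increasing sequence of nonnegative integers is realized as a Thom–Boardman symbol: for every function s : ℕ → ℕ with s_{p+1} ≤ s_p for all p, there exist m ≥ 0 and a proper ideal J ⊆ 𝒜_m such that the p-th entry of TB(J) equals s_p for every p. (Note that every non-increasing sequence of nonnegative integers is eventually constant.) -/
open MvPowerSeries

/-- `𝒜 m` : formal power series in `m` variables over `ℂ`, the algebraic model for the
local ring of germs of differentiable functions at the origin of `ℂ^m`. -/
abbrev Amod (m : ℕ) : Type := MvPowerSeries (Fin m) ℂ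

/-- Formal partial derivative `∂/∂x_j` of a multivariate power series. -/
noncomputable def pd {m : ℕ} (j : Fin m) (φ : Amod m) : Amod m :=
  fun e => ((e j + 1 : ℕ) : ℂ) * MvPowerSeries.coeff (e + Finsupp.single j 1) φ

/-- The differential at the origin: the vector of degree-one coefficients. -/
noncomputable def diffAtZero {m : ℕ} (φ : Amod m) : Fin m → ℂ :=
  fun j => MvPowerSeries.coeff (Finsupp.single j 1) φ

/-- The rank of an ideal `B ⊆ 𝒜 m`: the dimension of the `ℂ`-linear span of the
differentials at `0` of the elements of `B`. -/
noncomputable def rankIdeal {m : ℕ} (B : Ideal (Amod m)) : ℕ :=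
  Module.finrank ℂ (Submodule.span ℂ (diffAtZero '' (B : Set (Amod m))))

/-- The corank of an ideal `B ⊆ 𝒜 m`. -/
noncomputable def corankIdeal {m : ℕ} (B : Ideal (Amod m)) : ℕ := m - rankIdeal B

/-- The Jacobian extension `Δ_k B` (lower index): the ideal generated by `B` together with
all `k × k` minors of Jacobian matrices of `k`-tuples of elements of `B`; for `k > m` it
is `B` itself. -/
noncomputable def jacExt {m : ℕ} (k : ℕ) (B : Ideal (Amod m)) : Ideal (Amod m) :=
  if m < k then B
  else B ⊔ Ideal.span { f | ∃ φ : Fin k → Amod m, (∀ i, φ i ∈ B) ∧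
    ∃ j : Fin k → Fin m, StrictMono j ∧
      f = Matrix.det (Matrix.of fun i l => pd (j l) (φ i)) }

/-- Jacobian extension with upper index: `Δ^i B = Δ_{m-i+1} B`. -/
noncomputable def jacExtUpper {m : ℕ} (i : ℕ) (B : Ideal (Amod m)) : Ideal (Amod m) :=
  jacExt (m - i + 1) B

/-- The iterated critical extensions `TBiter J p = Δ^{i_p} ⋯ Δ^{i_1} J`. -/
noncomputable def TBiter {m : ℕ} (J : Ideal (Amod m)) : ℕ → Ideal (Amod m)
  | 0 => J
  | p + 1 => jacExtUpper (corankIdeal (TBiter J p)) (TBiter J p)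

/-- The Thom–Boardman symbol, `0`-indexed: `TB J p` is the `(p+1)`-st entry `i_{p+1}`,
i.e. `TB J 0 = corank J` and `TB J p = corank (Δ^{i_p} ⋯ Δ^{i_1} J)`. -/
noncomputable def TB {m : ℕ} (J : Ideal (Amod m)) (p : ℕ) : ℕ :=
  corankIdeal (TBiter J p)

/-- Coefficient `a_i` of the generic monic polynomial of degree `n`
(the first block of `n` variables of `𝒜 (n+r)`), with `a_n = 1` and `a_i = 0` for `i > n`. -/
noncomputable def aCoef (n r i : ℕ) : Amod (n + r) :=
  if h : i < n then MvPowerSeries.X (Fin.castAdd r ⟨i, h⟩)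
  else if i = n then 1 else 0

/-- Coefficient `b_j` of the generic monic polynomial of degree `r`
(the last block of `r` variables of `𝒜 (n+r)`), with `b_r = 1` and `b_j = 0` for `j > r`. -/
noncomputable def bCoef (n r j : ℕ) : Amod (n + r) :=
  if h : j < r then MvPowerSeries.X (Fin.natAdd n ⟨j, h⟩)
  else if j = r then 1 else 0

/-- Coefficient `c_k` of the product `(x^n + Σ_{i<n} a_i x^i) (x^r + Σ_{j<r} b_j x^j)`. -/
noncomputable def cCoef (n r k : ℕ) : Amod (n + r) :=
  ∑ p ∈ Finset.HasAntidiagonal.antidiagonal k, aCoef n r p.1 * bCoef n r p.2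

/-- The ideal `I(μ_{n,r}) ⊆ 𝒜 (n+r)` of the polynomial multiplication map `μ_{n,r}`,
generated by `c_0, …, c_{n+r-1}`. -/
noncomputable def muIdeal (n r : ℕ) : Ideal (Amod (n + r)) :=
  Ideal.span (Set.range fun k : Fin (n + r) => cCoef n r (k : ℕ))

/-- The sequence `I(n,r)` given by the Euclidean algorithm on `n` and `r` (0-indexed):
`r` repeated `n / r` times, then `r₁ = n % r` repeated `r / r₁` times, …, followed by zeros. -/
def euclidSeq (n r p : ℕ) : ℕ :=
  if h : r = 0 then 0
  else if p < n / r then r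
  else euclidSeq r (n % r) (p - n / r)
termination_by r
decreasing_by exact Nat.mod_lt _ (Nat.pos_of_ne_zero h)

/-- The `ℂ`-algebra embedding `𝒜 m₁ → 𝒜 (m₁+m₂)` using the first `m₁` variables. -/
noncomputable def embL {m₁ m₂ : ℕ} (φ : Amod m₁) : Amod (m₁ + m₂) :=
  fun e =>
    if ∀ j : Fin m₂, e (Fin.natAdd m₁ j) = 0 then
      MvPowerSeries.coeff (Finsupp.equivFunOnFinite.symm fun i => e (Fin.castAdd m₂ i)) φ
    else 0

/-- The `ℂ`-algebra embedding `𝒜 m₂ → 𝒜 (m₁+m₂)` using the last `m₂` variables. -/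
noncomputable def embR {m₁ m₂ : ℕ} (φ : Amod m₂) : Amod (m₁ + m₂) :=
  fun e =>
    if ∀ i : Fin m₁, e (Fin.castAdd m₂ i) = 0 then
      MvPowerSeries.coeff (Finsupp.equivFunOnFinite.symm fun j => e (Fin.natAdd m₁ j)) φ
    else 0

/-- The product ideal `J₁ ⊞ J₂ ⊆ 𝒜 (m₁+m₂)`, generated by the images of `J₁` and `J₂`
under the two embeddings; it models the ideal of the Cartesian product of two map-germs. -/
noncomputable def prodIdeal {m₁ m₂ : ℕ} (J₁ : Ideal (Amod m₁)) (J₂ : Ideal (Amod m₂)) :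
    Ideal (Amod (m₁ + m₂)) :=
  Ideal.span (embL '' (J₁ : Set (Amod m₁)) ∪ embR '' (J₂ : Set (Amod m₂)))

section Aux

variable {m : ℕ}

lemma coeff_pd (c : Fin m) (φ : Amod m) (e : Fin m →₀ ℕ) :
    MvPowerSeries.coeff e (pd c φ) =
      ((e c + 1 : ℕ) : ℂ) * MvPowerSeries.coeff (e + Finsupp.single c 1) φ := rfl

lemma sub_single_add_single (e : Fin m →₀ ℕ) {c j : Fin m} (hcj : c ≠ j) (n : ℕ) :
    e + Finsupp.single c 1 - Finsupp.single j n = (e - Finsupp.single j n) + Finsupp.single c 1 := by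
  ext x
  simp only [Finsupp.tsub_apply, Finsupp.add_apply, Finsupp.single_apply]
  rcases eq_or_ne j x with rfl | hjx
  · rw [if_neg (fun h => hcj h)]
    simp
  · rw [if_neg hjx]
    split_ifs <;> omega

lemma add_single_sub_single (e : Fin m →₀ ℕ) (c : Fin m) {n : ℕ} (hn : 1 ≤ n) :
    e + Finsupp.single c 1 - Finsupp.single c n = e - Finsupp.single c (n - 1) := by
  ext x
  simp only [Finsupp.tsub_apply, Finsupp.add_apply, Finsupp.single_apply]
  split_ifs <;> omega

lemma sub_single_add_same (e : Fin m →₀ ℕ) (c : Fin m) {n : ℕ} (hn1 : 1 ≤ n) (hn : n ≤ e c) :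
    e - Finsupp.single c n + Finsupp.single c 1 = e - Finsupp.single c (n - 1) := by
  ext x
  simp only [Finsupp.tsub_apply, Finsupp.add_apply, Finsupp.single_apply]
  rcases eq_or_ne c x with rfl | hcx
  · split_ifs with h
    · omega
    · exact absurd rfl h
  · rw [if_neg hcx, if_neg hcx, if_neg hcx]
    omega

lemma pd_one (c : Fin m) : pd c (1 : Amod m) = 0 := by
  apply MvPowerSeries.ext
  intro e
  rw [coeff_pd, map_zero, MvPowerSeries.coeff_one, if_neg, mul_zero]
  intro h
  have := DFunLike.congr_fun h c
  simp [Finsupp.single_apply] at this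

lemma pd_mul_X_pow (c j : Fin m) (f : Amod m) {n : ℕ} (hn : 1 ≤ n) :
    pd c (f * X j ^ n) =
      pd c f * X j ^ n + if c = j then (n : ℂ) • (f * X j ^ (n - 1)) else 0 := by
  apply MvPowerSeries.ext
  intro e
  rw [map_add, coeff_pd]
  rcases eq_or_ne c j with rfl | hcj
  · rw [if_pos rfl, map_smul, smul_eq_mul]
    simp only [X_pow_eq, coeff_mul_monomial, mul_one]
    have hEc : ((e + Finsupp.single c 1 : Fin m →₀ ℕ)) c = e c + 1 := by
      simp [Finsupp.add_apply, Finsupp.single_eq_same]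
    have hidx : e + Finsupp.single c 1 - Finsupp.single c n = e - Finsupp.single c (n - 1) :=
      add_single_sub_single e c hn
    by_cases h1 : n ≤ e c
    · have g1 : Finsupp.single c n ≤ e + Finsupp.single c 1 := by
        rw [Finsupp.single_le_iff, hEc]; omega
      have g2 : Finsupp.single c n ≤ e := Finsupp.single_le_iff.mpr h1
      have g3 : Finsupp.single c (n - 1) ≤ e := Finsupp.single_le_iff.mpr (by omega)
      rw [if_pos g1, if_pos g2, if_pos g3, coeff_pd, hidx, sub_single_add_same e c hn h1]
      have h2 : ((e - Finsupp.single c n : Fin m →₀ ℕ)) c = e c - n := by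
        rw [Finsupp.tsub_apply, Finsupp.single_eq_same]
      rw [h2]
      have h3 : ((e c - n + 1 : ℕ) : ℂ) = (e c : ℂ) - n + 1 := by push_cast [h1]; ring
      rw [h3]
      push_cast
      ring
    · by_cases h2 : n ≤ e c + 1
      · have g1 : Finsupp.single c n ≤ e + Finsupp.single c 1 := by
          rw [Finsupp.single_le_iff, hEc]; omega
        have g2 : ¬ Finsupp.single c n ≤ e := by rw [Finsupp.single_le_iff]; omega
        have g3 : Finsupp.single c (n - 1) ≤ e := by rw [Finsupp.single_le_iff]; omega
        rw [if_pos g1, if_neg g2, if_pos g3, hidx]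
        have h3 : ((e c + 1 : ℕ) : ℂ) = (n : ℂ) := by
          have : e c + 1 = n := by omega
          exact_mod_cast congrArg (Nat.cast : ℕ → ℂ) this
        rw [h3]
        ring
      · have g1 : ¬ Finsupp.single c n ≤ e + Finsupp.single c 1 := by
          rw [Finsupp.single_le_iff, hEc]; omega
        have g2 : ¬ Finsupp.single c n ≤ e := by rw [Finsupp.single_le_iff]; omega
        have g3 : ¬ Finsupp.single c (n - 1) ≤ e := by rw [Finsupp.single_le_iff]; omega
        rw [if_neg g1, if_neg g2, if_neg g3]
        ring
  · rw [if_neg hcj, map_zero, add_zero]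
    simp only [X_pow_eq, coeff_mul_monomial, mul_one]
    have hEj : ((e + Finsupp.single c 1 : Fin m →₀ ℕ)) j = e j := by
      rw [Finsupp.add_apply, Finsupp.single_apply, if_neg hcj, add_zero]
    by_cases h1 : n ≤ e j
    · have g1 : Finsupp.single j n ≤ e + Finsupp.single c 1 := by
        rw [Finsupp.single_le_iff, hEj]; omega
      have g2 : Finsupp.single j n ≤ e := Finsupp.single_le_iff.mpr h1
      rw [if_pos g1, if_pos g2, coeff_pd, sub_single_add_single e hcj n]
      have h2 : ((e - Finsupp.single j n : Fin m →₀ ℕ)) c = e c := by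
        rw [Finsupp.tsub_apply, Finsupp.single_apply, if_neg (fun h : j = c => hcj h.symm)]
        omega
      rw [h2]
    · have g1 : ¬ Finsupp.single j n ≤ e + Finsupp.single c 1 := by
        rw [Finsupp.single_le_iff, hEj]; omega
      have g2 : ¬ Finsupp.single j n ≤ e := by rw [Finsupp.single_le_iff]; omega
      rw [if_neg g1, if_neg g2, mul_zero]

lemma pd_X_pow (c j : Fin m) {n : ℕ} (hn : 1 ≤ n) :
    pd c (X j ^ n) = if c = j then (n : ℂ) • (X j ^ (n - 1) : Amod m) else 0 := by
  have := pd_mul_X_pow c j (1 : Amod m) hn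
  rw [one_mul, pd_one, zero_mul, zero_add] at this
  rw [this]
  split_ifs <;> simp

lemma diffAtZero_mul_X_pow (f : Amod m) (j : Fin m) {n : ℕ} (hn : 1 ≤ n) :
    diffAtZero (f * X j ^ n) =
      if n = 1 then (MvPowerSeries.constantCoeff f) • (Pi.single j 1 : Fin m → ℂ)
      else (0 : Fin m → ℂ) := by
  funext l
  simp only [diffAtZero, X_pow_eq, coeff_mul_monomial, mul_one]
  rcases eq_or_ne n 1 with rfl | hn1
  · rw [if_pos rfl, Pi.smul_apply, Pi.single_apply, smul_eq_mul]
    rcases eq_or_ne l j with rfl | hlj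
    · rw [if_pos (le_refl _), if_pos rfl, tsub_self, mul_one,
        MvPowerSeries.coeff_zero_eq_constantCoeff]
    · rw [if_neg, if_neg (fun h : l = j => hlj h), mul_zero]
      rw [Finsupp.single_le_iff, Finsupp.single_apply, if_neg (fun h : l = j => hlj h)]
      omega
  · rw [if_neg hn1, if_neg, Pi.zero_apply]
    rw [Finsupp.single_le_iff, Finsupp.single_apply]
    split_ifs <;> omega

end Aux

section Aux2

variable {m : ℕ}

lemma pd_zero' (c : Fin m) : pd c (0 : Amod m) = 0 := by
  apply MvPowerSeries.ext
  intro e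
  rw [coeff_pd, map_zero, mul_zero, map_zero]

lemma pd_add' (c : Fin m) (f g : Amod m) : pd c (f + g) = pd c f + pd c g := by
  apply MvPowerSeries.ext
  intro e
  rw [map_add, coeff_pd, coeff_pd, coeff_pd, map_add]
  ring

lemma diffAtZero_zero : diffAtZero (0 : Amod m) = 0 := by
  funext l
  simp [diffAtZero]

lemma diffAtZero_add (f g : Amod m) :
    diffAtZero (f + g) = diffAtZero f + diffAtZero g := by
  funext l
  simp [diffAtZero, map_add]

lemma span_elim {M : Type*} [AddCommMonoid M] (F : Amod m → M)
    (Fzero : F 0 = 0) (Fadd : ∀ x y, F (x + y) = F x + F y)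
    {S : Set (Amod m)} {x : Amod m} (hx : x ∈ Ideal.span S)
    (N : AddSubmonoid M) (hF : ∀ (a : Amod m), ∀ g ∈ S, F (a * g) ∈ N) : F x ∈ N := by
  classical
  obtain ⟨cf, hsupp, rfl⟩ := Submodule.mem_span_set.mp hx
  rw [Finsupp.sum]
  have main : ∀ t : Finset (Amod m), (↑t : Set (Amod m)) ⊆ S →
      F (∑ g ∈ t, cf g • g) ∈ N := by
    intro t
    induction t using Finset.induction_on with
    | empty => intro _; simpa [Fzero] using N.zero_mem
    | @insert a t ha ih =>
      intro ht
      rw [Finset.sum_insert ha, Fadd]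
      refine N.add_mem ?_ (ih fun y hy => ht (Finset.mem_insert_of_mem hy))
      rw [smul_eq_mul]
      exact hF _ _ (ht (Finset.mem_insert_self a t))
  exact main cf.support hsupp

/-- generator set for a monomial ideal -/
def IbSet {m : ℕ} (b : Fin m → ℕ) : Set (Amod m) :=
  { f | ∃ j : Fin m, b j ≠ 0 ∧ f = X j ^ b j }

noncomputable def Ib {m : ℕ} (b : Fin m → ℕ) : Ideal (Amod m) := Ideal.span (IbSet b)

def nstep (x : ℕ) : ℕ := if 2 ≤ x then x - 1 else x

lemma X_pow_mem_Ib (b : Fin m → ℕ) (j : Fin m) (hj : b j ≠ 0) : X j ^ b j ∈ Ib b :=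
  Ideal.subset_span ⟨j, hj, rfl⟩

lemma X_pow_mem_step (b : Fin m → ℕ) (j : Fin m) (hj : b j ≠ 0) :
    X j ^ b j ∈ Ib (fun i => nstep (b i)) := by
  by_cases h2 : 2 ≤ b j
  · have hns : nstep (b j) = b j - 1 := if_pos h2
    have hgen : (X j ^ (b j - 1) : Amod m) ∈ Ib (fun i => nstep (b i)) := by
      refine Ideal.subset_span ⟨j, ?_, ?_⟩
      · show nstep (b j) ≠ 0
        omega
      · show X j ^ (b j - 1) = X j ^ nstep (b j)
        rw [hns]
    have hpow : (X j ^ b j : Amod m) = X j ^ (b j - 1) * X j := by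
      rw [← pow_succ]
      congr 1
      omega
    rw [hpow]
    exact Ideal.mul_mem_right _ _ hgen
  · have hns : nstep (b j) = b j := if_neg h2
    refine Ideal.subset_span ⟨j, ?_, ?_⟩
    · show nstep (b j) ≠ 0
      omega
    · show X j ^ b j = X j ^ nstep (b j)
      rw [hns]

lemma pd_mem_step (b : Fin m → ℕ) (c : Fin m) (hc : b c ≠ 1) {x : Amod m} (hx : x ∈ Ib b) :
    pd c x ∈ Ib (fun i => nstep (b i)) := by
  refine span_elim (pd c) (pd_zero' c) (pd_add' c) hx
    (Ib fun i => nstep (b i)).toAddSubmonoid ?_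
  rintro a g ⟨j, hj, rfl⟩
  show pd c (a * X j ^ b j) ∈ Ib fun i => nstep (b i)
  rw [pd_mul_X_pow c j a (Nat.one_le_iff_ne_zero.mpr hj)]
  refine Ideal.add_mem _ (Ideal.mul_mem_left _ _ (X_pow_mem_step b j hj)) ?_
  split_ifs with h
  · subst h
    have h2 : 2 ≤ b c := by omega
    have hns : nstep (b c) = b c - 1 := if_pos h2
    rw [Algebra.smul_def]
    refine Ideal.mul_mem_left _ _ (Ideal.mul_mem_left _ _ ?_)
    refine Ideal.subset_span ⟨c, ?_, ?_⟩
    · show nstep (b c) ≠ 0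
      omega
    · show X c ^ (b c - 1) = X c ^ nstep (b c)
      rw [hns]
  · exact Ideal.zero_mem _

lemma minor_mem (b : Fin m → ℕ) {k : ℕ}
    (hk : (Finset.univ.filter fun j => b j = 1).card < k)
    (φ : Fin k → Amod m) (hφ : ∀ i, φ i ∈ Ib b)
    (col : Fin k → Fin m) (hcol : StrictMono col) :
    Matrix.det (Matrix.of fun i l => pd (col l) (φ i)) ∈ Ib (fun i => nstep (b i)) := by
  classical
  obtain ⟨i₀, hi₀⟩ : ∃ i : Fin k, b (col i) ≠ 1 := by
    by_contra hcon
    push_neg at hcon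
    have hsub : Finset.univ.image col ⊆ Finset.univ.filter fun j => b j = 1 := by
      intro x hx
      rcases Finset.mem_image.mp hx with ⟨i, _, rfl⟩
      exact Finset.mem_filter.mpr ⟨Finset.mem_univ _, hcon i⟩
    have hcard := Finset.card_le_card hsub
    rw [Finset.card_image_of_injective _ hcol.injective, Finset.card_univ,
      Fintype.card_fin] at hcard
    omega
  rw [Matrix.det_apply]
  refine Submodule.sum_mem _ fun σ _ => ?_
  rw [Units.smul_def]
  refine zsmul_mem ?_ _
  rw [← Finset.mul_prod_erase Finset.univ _ (Finset.mem_univ i₀)]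
  refine Ideal.mul_mem_right _ _ ?_
  show pd (col i₀) (φ (σ i₀)) ∈ _
  exact pd_mem_step b (col i₀) hi₀ (hφ (σ i₀))

end Aux2

section Aux3

variable {m : ℕ}

lemma diffAtZero_X (j : Fin m) : diffAtZero (X j : Amod m) = (Pi.single j 1 : Fin m → ℂ) := by
  have h := diffAtZero_mul_X_pow (1 : Amod m) j (le_refl 1)
  rw [one_mul, pow_one] at h
  rw [h, if_pos rfl, map_one, one_smul]

lemma span_diff_Ib (b : Fin m → ℕ) :
    Submodule.span ℂ (diffAtZero '' ((Ib b : Ideal (Amod m)) : Set (Amod m)))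
      = Submodule.span ℂ ((fun j => (Pi.single j 1 : Fin m → ℂ)) '' {j : Fin m | b j = 1}) := by
  apply le_antisymm
  · rw [Submodule.span_le]
    rintro _ ⟨x, hx, rfl⟩
    have hx' : x ∈ Ideal.span (IbSet b) := hx
    refine span_elim diffAtZero diffAtZero_zero diffAtZero_add hx'
      (Submodule.span ℂ ((fun j => (Pi.single j 1 : Fin m → ℂ)) '' {j : Fin m | b j = 1})).toAddSubmonoid ?_
    rintro a g ⟨j, hj, rfl⟩
    show diffAtZero (a * X j ^ b j) ∈ Submodule.span ℂ _
    rw [diffAtZero_mul_X_pow a j (Nat.one_le_iff_ne_zero.mpr hj)]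
    split_ifs with h1
    · exact Submodule.smul_mem _ _ (Submodule.subset_span ⟨j, h1, rfl⟩)
    · exact Submodule.zero_mem _
  · rw [Submodule.span_le]
    rintro _ ⟨j, hj, rfl⟩
    refine Submodule.subset_span ⟨X j, ?_, diffAtZero_X j⟩
    have hXj : (X j : Amod m) = X j ^ b j := by
      rw [Set.mem_setOf_eq] at hj
      rw [hj, pow_one]
    rw [hXj]
    exact X_pow_mem_Ib b j (by rw [Set.mem_setOf_eq] at hj; omega)

lemma rankIdeal_Ib (b : Fin m → ℕ) :
    rankIdeal (Ib b) = (Finset.univ.filter fun j => b j = 1).card := by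
  classical
  rw [rankIdeal, span_diff_Ib]
  have himg : (fun j => (Pi.single j 1 : Fin m → ℂ)) '' {j : Fin m | b j = 1}
      = Set.range (fun j : {j : Fin m // b j = 1} => (Pi.single (j : Fin m) 1 : Fin m → ℂ)) := by
    exact Set.image_eq_range _ _
  rw [himg]
  have hli : LinearIndependent ℂ
      (fun j : {j : Fin m // b j = 1} => (Pi.single (j : Fin m) 1 : Fin m → ℂ)) := by
    rw [Fintype.linearIndependent_iff]
    intro g hg i
    have h0 := congrFun hg (i : Fin m)
    rw [Finset.sum_apply] at h0
    simp only [Pi.smul_apply, Pi.single_apply, smul_eq_mul, mul_ite, mul_one, mul_zero] at h0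
    rw [Pi.zero_apply] at h0
    simpa [Subtype.coe_inj] using h0
  rw [finrank_span_eq_card hli, Fintype.card_subtype]

end Aux3

section Aux4

variable {m : ℕ}

lemma jacExt_Ib (b : Fin m → ℕ) :
    jacExt ((Finset.univ.filter fun j => b j = 1).card + 1) (Ib b)
      = Ib (fun i => nstep (b i)) := by
  classical
  set q := (Finset.univ.filter fun j => b j = 1).card with hq
  have hqle : q ≤ m := by
    rw [hq]
    exact le_trans (Finset.card_filter_le _ _) (by rw [Finset.card_univ, Fintype.card_fin])
  rcases eq_or_lt_of_le hqle with heq | hlt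
  · -- all coordinates have b j = 1
    have huniv : (Finset.univ.filter fun j => b j = 1) = Finset.univ :=
      Finset.eq_univ_of_card _ (by rw [← hq, heq, Fintype.card_fin])
    have hall : ∀ j, b j = 1 := by
      intro j
      have hmem : j ∈ Finset.univ.filter fun j => b j = 1 := by
        rw [huniv]; exact Finset.mem_univ j
      exact (Finset.mem_filter.mp hmem).2
    have hstep : (fun i => nstep (b i)) = b := by
      funext i
      rw [hall i]
      rfl
    rw [jacExt, if_pos (by omega), hstep]
  · rw [jacExt, if_neg (by omega)]
    apply le_antisymm
    · refine sup_le ?_ ?_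
      · refine Ideal.span_le.mpr ?_
        rintro f ⟨j, hj, rfl⟩
        exact X_pow_mem_step b j hj
      · refine Ideal.span_le.mpr ?_
        rintro f ⟨φ, hφ, col, hcol, rfl⟩
        exact minor_mem b (by omega) φ hφ col hcol
    · refine Ideal.span_le.mpr ?_
      rintro f ⟨j, hj, rfl⟩
      have hj' : nstep (b j) ≠ 0 := hj
      by_cases h2 : 2 ≤ b j
      · -- construct an explicit minor
        set T := Finset.univ.filter (fun i => b i = 1) with hT
        have hjT : j ∉ T := by
          rw [hT, Finset.mem_filter]
          push_neg
          intro _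
          omega
        set F : Finset (Fin m) := insert j T with hF
        have hcardF : F.card = q + 1 := by
          rw [hF, Finset.card_insert_of_notMem hjT, ← hq]
        set colE := F.orderEmbOfFin hcardF with hcolE
        have hmemF : ∀ i, colE i ∈ F := fun i => Finset.orderEmbOfFin_mem F hcardF i
        have hinj : Function.Injective colE := colE.injective
        obtain ⟨i₀, hi₀⟩ : ∃ i, colE i = j := by
          have hjR : j ∈ Set.range ⇑colE := by
            rw [hcolE, Finset.range_orderEmbOfFin]
            exact Finset.mem_coe.mpr (Finset.mem_insert_self j T)
          exact hjR
        have hone : ∀ i, colE i ≠ j → b (colE i) = 1 := by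
          intro i hne
          have hmem := hmemF i
          rw [hF, Finset.mem_insert] at hmem
          rcases hmem with h | h
          · exact absurd h hne
          · rw [hT, Finset.mem_filter] at h
            exact h.2
        have hbne : ∀ i, b (colE i) ≠ 0 := by
          intro i
          by_cases hne : colE i = j
          · rw [hne]; omega
          · rw [hone i hne]; omega
        set φ : Fin (q + 1) → Amod m := fun i => X (colE i) ^ b (colE i) with hφdef
        have hφmem : ∀ i, φ i ∈ Ib b := fun i => X_pow_mem_Ib b _ (hbne i)
        have hdiag : (Matrix.of fun i l => pd (colE l) (φ i))
            = Matrix.diagonal (fun i => if colE i = j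
                then ((b j : ℕ) : ℂ) • (X j ^ (b j - 1) : Amod m) else 1) := by
          apply Matrix.ext
          intro i l
          rw [Matrix.of_apply]
          show pd (colE l) (X (colE i) ^ b (colE i)) = _
          rw [pd_X_pow _ _ (Nat.one_le_iff_ne_zero.mpr (hbne i))]
          rcases eq_or_ne i l with rfl | hil
          · rw [Matrix.diagonal_apply_eq, if_pos rfl]
            rcases eq_or_ne (colE i) j with hj3 | hj3
            · rw [if_pos hj3, hj3]
            · rw [if_neg hj3, hone i hj3]
              simp
          · rw [Matrix.diagonal_apply_ne _ (fun h => hil h)]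
            rw [if_neg (fun h : colE l = colE i => hil ((hinj h).symm))]
        have hdet : Matrix.det (Matrix.of fun i l => pd (colE l) (φ i))
            = ((b j : ℕ) : ℂ) • (X j ^ (b j - 1) : Amod m) := by
          rw [hdiag, Matrix.det_diagonal,
            ← Finset.mul_prod_erase Finset.univ _ (Finset.mem_univ i₀), if_pos hi₀]
          rw [Finset.prod_eq_one, mul_one]
          intro i hi
          rw [if_neg]
          intro hcon
          exact (Finset.mem_erase.mp hi).1 (hinj (hcon.trans hi₀.symm))
        have hminor : ((b j : ℕ) : ℂ) • (X j ^ (b j - 1) : Amod m) ∈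
            Ideal.span { f | ∃ φ : Fin (q + 1) → Amod m, (∀ i, φ i ∈ Ib b) ∧
              ∃ jj : Fin (q + 1) → Fin m, StrictMono jj ∧
                f = Matrix.det (Matrix.of fun i l => pd (jj l) (φ i)) } := by
          rw [← hdet]
          exact Ideal.subset_span ⟨φ, hφmem, ⇑colE, colE.strictMono, rfl⟩
        have hbj0 : ((b j : ℕ) : ℂ) ≠ 0 := Nat.cast_ne_zero.mpr (by omega)
        have hXmem : (X j ^ (b j - 1) : Amod m) ∈
            Ideal.span { f | ∃ φ : Fin (q + 1) → Amod m, (∀ i, φ i ∈ Ib b) ∧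
              ∃ jj : Fin (q + 1) → Fin m, StrictMono jj ∧
                f = Matrix.det (Matrix.of fun i l => pd (jj l) (φ i)) } := by
          have h3 : (X j ^ (b j - 1) : Amod m)
              = (algebraMap ℂ (Amod m) (((b j : ℕ) : ℂ))⁻¹)
                * (((b j : ℕ) : ℂ) • (X j ^ (b j - 1) : Amod m)) := by
            rw [← Algebra.smul_def, smul_smul, inv_mul_cancel₀ hbj0, one_smul]
          rw [h3]
          exact Ideal.mul_mem_left _ _ hminor
        have hns : nstep (b j) = b j - 1 := if_pos h2
        refine Submodule.mem_sup_right ?_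
        show X j ^ (fun i => nstep (b i)) j ∈ _
        show X j ^ nstep (b j) ∈ _
        rw [hns]
        exact hXmem
      · have hns : nstep (b j) = b j := if_neg h2
        refine Submodule.mem_sup_left ?_
        show X j ^ (fun i => nstep (b i)) j ∈ _
        show X j ^ nstep (b j) ∈ _
        rw [hns]
        refine X_pow_mem_Ib b j ?_
        rw [← hns]
        exact hj'

end Aux4

section Aux5

lemma card_filter_ge {m k : ℕ} (hk : k ≤ m) :
    (Finset.univ.filter fun j : Fin m => k ≤ (j : ℕ)).card = m - k := by
  classical
  have h1 : (Finset.univ.filter fun j : Fin m => (j : ℕ) < k).card = k := by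
    refine Finset.card_eq_of_bijective (fun i hi => ⟨i, lt_of_lt_of_le hi hk⟩) ?_ ?_ ?_
    · intro a ha
      exact ⟨(a : ℕ), (Finset.mem_filter.mp ha).2, Fin.ext rfl⟩
    · intro i hi
      exact Finset.mem_filter.mpr ⟨Finset.mem_univ _, hi⟩
    · intro i j hi hj hij
      simpa using congrArg Fin.val hij
  have h2 := Finset.card_filter_add_card_filter_not
    (s := (Finset.univ : Finset (Fin m))) (p := fun j : Fin m => (j : ℕ) < k)
  rw [Finset.card_univ, Fintype.card_fin] at h2
  have h3 : (Finset.univ.filter fun j : Fin m => ¬ (j : ℕ) < k)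
      = Finset.univ.filter fun j : Fin m => k ≤ (j : ℕ) :=
    Finset.filter_congr fun j _ => by omega
  rw [h1, h3] at h2
  omega

open Classical in
noncomputable def expo (s : ℕ → ℕ) (j : ℕ) : ℕ :=
  if h : ∃ p, s p ≤ j then Nat.find h + 1 else 0


end Aux5

/-- **Realization of arbitrary non-increasing sequences.** Every non-increasing sequence of
nonnegative integers is the Thom–Boardman symbol of some map-germ: for every `s : ℕ → ℕ`
with `s (p+1) ≤ s p` for all `p`, there are `m` and a proper ideal `J ⊆ 𝒜 m` whose
Thom–Boardman symbol is `s`. -/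
theorem exists_ideal_with_tb (s : ℕ → ℕ) (hs : ∀ p : ℕ, s (p + 1) ≤ s p) :
    ∃ (m : ℕ) (J : Ideal (Amod m)), J ≠ ⊤ ∧ ∀ p : ℕ, TB J p = s p := by
  classical
  have hanti : ∀ p q : ℕ, p ≤ q → s q ≤ s p :=
    fun p q h => antitone_nat_of_succ_le hs h
  set m := s 0 with hm
  set a : Fin m → ℕ := fun j => expo s (j : ℕ) with ha
  set bb : ℕ → Fin m → ℕ :=
    fun p j => if expo s (j : ℕ) = 0 then 0 else max (expo s (j : ℕ) - p) 1 with hbb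
  have key : ∀ (p : ℕ) (j : Fin m), bb p j = 1 ↔ s p ≤ (j : ℕ) := by
    intro p j
    simp only [hbb]
    by_cases h : ∃ q, s q ≤ (j : ℕ)
    · have he : expo s (j : ℕ) = Nat.find h + 1 := dif_pos h
      have hfind : s (Nat.find h) ≤ (j : ℕ) := Nat.find_spec h
      constructor
      · intro h1
        rw [he, if_neg (by omega)] at h1
        have h2 : Nat.find h ≤ p := by omega
        exact le_trans (hanti _ _ h2) hfind
      · intro h1
        have h2 : Nat.find h ≤ p := Nat.find_min' h h1
        rw [he, if_neg (by omega)]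
        omega
    · have he : expo s (j : ℕ) = 0 := dif_neg h
      rw [he, if_pos rfl]
      constructor
      · omega
      · intro h1
        exact absurd ⟨p, h1⟩ h
  have hb0 : bb 0 = a := by
    funext j
    simp only [hbb, ha]
    by_cases h : expo s (j : ℕ) = 0
    · rw [if_pos h, h]
    · rw [if_neg h]
      omega
  have hbstep : ∀ p, (fun i => nstep (bb p i)) = bb (p + 1) := by
    intro p
    funext i
    simp only [hbb, nstep]
    split_ifs <;> omega
  have hcard : ∀ p, (Finset.univ.filter fun j : Fin m => bb p j = 1).card = m - s p := by
    intro p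
    have hfe : (Finset.univ.filter fun j : Fin m => bb p j = 1)
        = Finset.univ.filter fun j : Fin m => s p ≤ (j : ℕ) :=
      Finset.filter_congr fun j _ => key p j
    rw [hfe, card_filter_ge (hanti 0 p (Nat.zero_le p))]
  have hrank : ∀ p, rankIdeal (Ib (bb p)) = m - s p := by
    intro p
    rw [rankIdeal_Ib, hcard p]
  have hiter : ∀ p, TBiter (Ib a) p = Ib (bb p) := by
    intro p
    induction p with
    | zero =>
      show Ib a = Ib (bb 0)
      rw [hb0]
    | succ p ih =>
      show jacExtUpper (corankIdeal (TBiter (Ib a) p)) (TBiter (Ib a) p) = _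
      rw [ih, jacExtUpper, corankIdeal, hrank p]
      have hsp : s p ≤ m := hanti 0 p (Nat.zero_le p)
      have harith : m - (m - (m - s p)) + 1 = (m - s p) + 1 := by omega
      rw [harith]
      have hJ := jacExt_Ib (bb p)
      rw [hcard p] at hJ
      rw [hJ, hbstep p]
  refine ⟨m, Ib a, ?_, ?_⟩
  · intro htop
    have h1 : (1 : Amod m) ∈ Ib a := htop ▸ Submodule.mem_top
    have h1' : (1 : Amod m) ∈ Ideal.span (IbSet a) := h1
    have h0 : (MvPowerSeries.constantCoeff : Amod m →+* ℂ) (1 : Amod m) ∈ (⊥ : AddSubmonoid ℂ) := by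
      refine span_elim (MvPowerSeries.constantCoeff : Amod m →+* ℂ) (map_zero _) (map_add _) h1' ⊥ ?_
      rintro x g ⟨j, hj, rfl⟩
      rw [AddSubmonoid.mem_bot, map_mul, map_pow, MvPowerSeries.constantCoeff_X,
        zero_pow hj, mul_zero]
    rw [AddSubmonoid.mem_bot, map_one] at h0
    exact one_ne_zero h0
  · intro p
    rw [TB, hiter p, corankIdeal, hrank p]
    have hsp : s p ≤ m := hanti 0 p (Nat.zero_le p)
    omega
end

section
/- Let B ⊆ 𝒜_m be a proper ideal of corank i (so 0 ≤ i ≤ m). Then: (a) Δ^i B = Δ_{m−i+1} B is a proper ideal of 𝒜_m (indeed it is contained in the maximal ideal); and (b) if i < m, then Δ_{m−i} B = 𝒜_m. Consequently Δ^i B, with i = corank B, is the critical Jacobian extension of B: the Jacobian extension by the minors of least order for which the extension is still a proper ideal. -/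
open MvPowerSeries

open Matrix in
lemma constantCoeff_pd {m : ℕ} (j : Fin m) (φ : Amod m) :
    constantCoeff (pd j φ) = diffAtZero φ j := by
  rw [← coeff_zero_eq_constantCoeff_apply, coeff_apply]
  simp [pd, diffAtZero]

open Matrix

/-- **The critical Jacobian extension.** Let `B ⊆ 𝒜 m` be a proper ideal of corank `i`.
Then (a) `Δ^i B = Δ_{m-i+1} B` is a proper ideal, indeed contained in the maximal ideal
of `𝒜 m`; and (b) if `i < m` then `Δ_{m-i} B = 𝒜 m`. Hence `Δ^i B` with `i = corank B` is
the critical Jacobian extension of `B`. -/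
theorem jacExtUpper_corank_is_critical (m : ℕ) (B : Ideal (Amod m)) (hB : B ≠ ⊤) :
    jacExtUpper (corankIdeal B) B ≠ ⊤ ∧
    jacExtUpper (corankIdeal B) B ≤ IsLocalRing.maximalIdeal (Amod m) ∧
    (corankIdeal B < m → jacExt (m - corankIdeal B) B = ⊤) := by
  classical
  set k := rankIdeal B with hk
  set W := Submodule.span ℂ (diffAtZero '' (B : Set (Amod m))) with hW
  have hWk : Module.finrank ℂ W = k := rfl
  have hkm : k ≤ m := by
    have h1 := Submodule.finrank_le W
    rw [hWk, Module.finrank_fintype_fun_eq_card, Fintype.card_fin] at h1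
    exact h1
  have hcor : corankIdeal B = m - k := rfl
  have hsub : m - corankIdeal B = k := by rw [hcor]; omega
  have hup : jacExtUpper (corankIdeal B) B = jacExt (k + 1) B := by
    rw [jacExtUpper, hsub]
  have hBle : B ≤ IsLocalRing.maximalIdeal (Amod m) := IsLocalRing.le_maximalIdeal hB
  have ha : jacExt (k + 1) B ≤ IsLocalRing.maximalIdeal (Amod m) := by
    rw [jacExt]
    split_ifs with h
    · exact hBle
    · refine sup_le hBle (Ideal.span_le.mpr ?_)
      rintro f ⟨φ, hφ, j, hjmono, rfl⟩
      rw [SetLike.mem_coe, IsLocalRing.mem_maximalIdeal, mem_nonunits_iff,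
        isUnit_iff_constantCoeff]
      have hdet : constantCoeff
          (Matrix.det (Matrix.of fun i l => pd (j l) (φ i)))
          = Matrix.det (Matrix.of fun (i l : Fin (k + 1)) => diffAtZero (φ i) (j l)) := by
        rw [RingHom.map_det]
        congr 1
        ext i l
        simp [Matrix.map_apply, constantCoeff_pd]
      rw [hdet]
      have hmem : ∀ i, diffAtZero (φ i) ∈ W := fun i =>
        Submodule.subset_span ⟨φ i, hφ i, rfl⟩
      have hnli : ¬ LinearIndependent ℂ (fun i : Fin (k + 1) => diffAtZero (φ i)) := by
        intro hli
        have hli' : LinearIndependent ℂ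
            (fun i : Fin (k + 1) => (⟨diffAtZero (φ i), hmem i⟩ : W)) :=
          hli.of_comp W.subtype
        have hcard := hli'.fintype_card_le_finrank
        rw [hWk, Fintype.card_fin] at hcard
        omega
      rw [Fintype.not_linearIndependent_iff] at hnli
      obtain ⟨g, hg, i0, hi0⟩ := hnli
      have hzero : Matrix.det (Matrix.of fun (i l : Fin (k + 1)) =>
          diffAtZero (φ i) (j l)) = 0 := by
        rw [← Matrix.exists_vecMul_eq_zero_iff]
        refine ⟨g, fun h0 => hi0 (by rw [h0]; rfl), ?_⟩
        funext l
        have := congrFun hg (j l)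
        simpa [Matrix.vecMul, dotProduct, Finset.sum_apply] using this
      rw [hzero]
      exact not_isUnit_zero
  refine ⟨?_, ?_, ?_⟩
  · rw [hup]
    exact ne_top_of_le_ne_top (Ideal.IsMaximal.ne_top inferInstance) ha
  · rw [hup]; exact ha
  · intro hlt
    have hkpos : 0 < k := by omega
    rw [hsub, jacExt, if_neg (by omega : ¬ m < k)]
    -- choose a linearly independent family of differentials
    obtain ⟨s, hs_sub, hs_span, hs_ind⟩ :=
      exists_linearIndependent ℂ (diffAtZero '' (B : Set (Amod m)))
    haveI : Fintype s := hs_ind.setFinite.fintype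
    have hscard : s.toFinset.card = k := by
      have h1 := finrank_span_set_eq_card hs_ind
      rw [hs_span, ← hW, hWk] at h1
      exact h1.symm
    have hscard' : Fintype.card s = k := by rw [← Set.toFinset_card, hscard]
    let e : Fin k ≃ s := (Fintype.equivFinOfCardEq hscard').symm
    have hchoice : ∀ i : Fin k, ∃ ψ, ψ ∈ B ∧ diffAtZero ψ = ((e i : Fin m → ℂ)) := by
      intro i
      obtain ⟨ψ, hψ, hd⟩ := hs_sub (e i).2
      exact ⟨ψ, hψ, hd⟩
    choose φ hφB hφd using hchoice
    set M : Matrix (Fin k) (Fin m) ℂ := Matrix.of fun i => diffAtZero (φ i) with hM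
    have hv_ind : LinearIndependent ℂ (fun i => M i) := by
      have : (fun i => M i) = ((↑) : s → (Fin m → ℂ)) ∘ e := funext fun i => hφd i
      rw [this]
      exact hs_ind.comp e e.injective
    have hMrank : M.rank = k := by
      have := hv_ind.rank_matrix
      rwa [Fintype.card_fin] at this
    have hspan_cols : Submodule.span ℂ (Set.range Mᵀ) = ⊤ := by
      apply Submodule.eq_top_of_finrank_eq
      rw [show Set.range Mᵀ = Set.range M.col from rfl, ← Matrix.rank_eq_finrank_span_cols, hMrank,
        Module.finrank_fintype_fun_eq_card, Fintype.card_fin]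
    obtain ⟨t, ht_sub, ht_span, ht_ind⟩ := exists_linearIndependent ℂ (Set.range Mᵀ)
    haveI : Fintype t := ht_ind.setFinite.fintype
    have htcard : Fintype.card t = k := by
      have h1 := finrank_span_set_eq_card ht_ind
      rw [ht_span, hspan_cols, finrank_top, Module.finrank_fintype_fun_eq_card,
        Fintype.card_fin] at h1
      rw [← Set.toFinset_card, ← h1]
    let e2 : Fin k ≃ t := (Fintype.equivFinOfCardEq htcard).symm
    have hc' : ∀ x : t, ∃ jj : Fin m, Mᵀ jj = (x : Fin k → ℂ) := fun x => ht_sub x.2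
    choose c hc using hc'
    set d : Fin k → Fin m := fun i => c (e2 i) with hd
    have hd_inj : Function.Injective d := by
      intro a b hab
      have : (e2 a : Fin k → ℂ) = (e2 b : Fin k → ℂ) := by
        rw [← hc (e2 a), ← hc (e2 b)]
        exact congrArg Mᵀ hab
      exact e2.injective (Subtype.ext this)
    set S : Finset (Fin m) := Finset.image d Finset.univ with hS
    have hScard : S.card = k := by
      rw [hS, Finset.card_image_of_injective _ hd_inj, Finset.card_univ, Fintype.card_fin]
    set j : Fin k → Fin m := fun l => S.orderEmbOfFin hScard l with hj
    have hjmono : StrictMono j := (S.orderEmbOfFin hScard).strictMono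
    have hjd0 : ∀ x ∈ S, ∃ a, d a = x := by
      intro x hx
      simp only [hS, Finset.mem_image, Finset.mem_univ, true_and] at hx
      exact hx
    have hjd : ∀ l, ∃ a, d a = j l := fun l => hjd0 _ (S.orderEmbOfFin_mem hScard l)
    choose a0 ha0 using hjd
    have hMTj : ∀ l, Mᵀ (j l) = ((e2 (a0 l) : Fin k → ℂ)) := by
      intro l
      rw [← ha0 l, hd]
      exact hc (e2 (a0 l))
    have hw_inj : Function.Injective (fun l => e2 (a0 l)) := by
      intro l1 l2 h12
      have h3 : d (a0 l1) = d (a0 l2) := by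
        rw [hd]
        exact congrArg c h12
      rw [ha0 l1, ha0 l2] at h3
      exact hjmono.injective h3
    have colind : LinearIndependent ℂ (fun l => Mᵀ (j l)) := by
      have : (fun l => Mᵀ (j l)) = ((↑) : t → (Fin k → ℂ)) ∘ (fun l => e2 (a0 l)) :=
        funext fun l => hMTj l
      rw [this]
      exact ht_ind.comp _ hw_inj
    set N : Matrix (Fin k) (Fin k) ℂ := Matrix.of fun i l => diffAtZero (φ i) (j l) with hN
    have hNunit : IsUnit N := by
      rw [← Matrix.linearIndependent_cols_iff_isUnit]
      exact colind
    have hNdet : IsUnit N.det := (Matrix.isUnit_iff_isUnit_det N).mp hNunit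
    have hconst : constantCoeff
        (Matrix.det (Matrix.of fun i l => pd (j l) (φ i))) = N.det := by
      rw [RingHom.map_det]
      congr 1
      ext i l
      simp [Matrix.map_apply, constantCoeff_pd, hN]
    have hfunit : IsUnit (Matrix.det (Matrix.of fun i l => pd (j l) (φ i))) := by
      rw [isUnit_iff_constantCoeff, hconst]
      exact hNdet
    have hfmem : (Matrix.det (Matrix.of fun i l => pd (j l) (φ i))) ∈
        B ⊔ Ideal.span { f | ∃ φ : Fin k → Amod m, (∀ i, φ i ∈ B) ∧
          ∃ j : Fin k → Fin m, StrictMono j ∧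
            f = Matrix.det (Matrix.of fun i l => pd (j l) (φ i)) } :=
      Ideal.mem_sup_right (Ideal.subset_span ⟨φ, hφB, j, hjmono, rfl⟩)
    exact Ideal.eq_top_of_isUnit_mem _ hfmem hfunit
end

section
/- For every proper ideal J ⊆ 𝒜_m, the Thom–Boardman symbol TB(J) = (i_1, i_2, …) is a non-increasing sequence of nonnegative integers: i_{p+1} ≤ i_p for all p ≥ 1, and each i_p satisfies 0 ≤ i_p ≤ m. -/
open MvPowerSeries

lemma le_jacExt {m : ℕ} (k : ℕ) (B : Ideal (Amod m)) : B ≤ jacExt k B := by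
  unfold jacExt
  split
  · exact le_rfl
  · exact le_sup_left

lemma rank_mono {m : ℕ} {B C : Ideal (Amod m)} (h : B ≤ C) :
    rankIdeal B ≤ rankIdeal C :=
  Submodule.finrank_mono (Submodule.span_mono (Set.image_mono h))

/-- **Thom–Boardman symbols are non-increasing.** For every proper ideal `J ⊆ 𝒜 m`, the
Thom–Boardman symbol of `J` is a non-increasing sequence of nonnegative integers, each of
whose entries is at most `m`. -/
theorem tb_antitone (m : ℕ) (J : Ideal (Amod m)) (hJ : J ≠ ⊤) :
    ∀ p : ℕ, TB J (p + 1) ≤ TB J p ∧ TB J p ≤ m := by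
  intro p
  constructor
  · have h : TBiter J p ≤ TBiter J (p + 1) := le_jacExt _ _
    exact Nat.sub_le_sub_left (rank_mono h) m
  · exact Nat.sub_le _ _
end
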